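/- Let P be a subset of a finite-dimensional real affine space that is locally polyhedral (every point has a neighborhood in which P agrees with a polyhedron), compact, and connected. Then P is a polytope (the convex hull of finitely many points). -/

import Mathlib

open Set Metric

section ChainLemmas

variable {E : Type*} [NormedAddCommGroup E]

lemma exists_chain_aux (P : Set E) (hconn : IsPreconnected P) {ε : ℝ} (hε : 0 < ε)
    {x y : E} (hx : x ∈ P) (hy : y ∈ P) :
    ∃ (n : ℕ) (p : ℕ → E), p 0 = x ∧ (∀ i, n ≤ i → p i = y) ∧ (∀ i, p i ∈ P) ∧
      ∀ i < n, dist (p i) (p (i + 1)) ≤ ε := by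
  set R : Set E := {z | z ∈ P ∧ ∃ (n : ℕ) (p : ℕ → E), p 0 = x ∧ (∀ i, n ≤ i → p i = z) ∧
      (∀ i, p i ∈ P) ∧ ∀ i < n, dist (p i) (p (i + 1)) ≤ ε} with hR
  have hxR : x ∈ R := ⟨hx, 0, fun _ => x, rfl, fun _ _ => rfl, fun _ => hx, by omega⟩
  have hext : ∀ z ∈ R, ∀ w ∈ P, dist z w ≤ ε → w ∈ R := by
    rintro z ⟨hzP, n, p, hp0, hptail, hpP, hpstep⟩ w hwP hdzw
    refine ⟨hwP, n + 1, fun i => if i ≤ n then p i else w, by simp [hp0], ?_, ?_, ?_⟩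
    · intro i hi
      have : ¬ (i ≤ n) := by omega
      simp [this]
    · intro i
      by_cases h : i ≤ n <;> simp [h, hpP i, hwP]
    · intro i hi
      by_cases h : i < n
      · have h1 : i ≤ n := by omega
        have h2 : i + 1 ≤ n := by omega
        simpa [h1, h2] using hpstep i h
      · have h3 : i = n := by omega
        have h4 : ¬ (n + 1 ≤ n) := by omega
        rw [h3]
        simp only []
        rw [if_pos (le_refl n), if_neg h4, hptail n le_rfl]
        exact hdzw
  -- the union of balls around R and around P \ R
  by_contra hcon
  have hyR : y ∉ R := fun h => hcon ⟨h.2.choose, h.2.choose_spec⟩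
  set U : Set E := ⋃ z ∈ R, ball z ε
  set W : Set E := ⋃ z ∈ P \ R, ball z ε
  have hU : IsOpen U := isOpen_biUnion fun _ _ => isOpen_ball
  have hW : IsOpen W := isOpen_biUnion fun _ _ => isOpen_ball
  have hcover : P ⊆ U ∪ W := by
    intro z hz
    by_cases h : z ∈ R
    · exact Or.inl (mem_biUnion h (mem_ball_self hε))
    · exact Or.inr (mem_biUnion ⟨hz, h⟩ (mem_ball_self hε))
  have hPU : (P ∩ U).Nonempty := ⟨x, hx, mem_biUnion hxR (mem_ball_self hε)⟩
  have hPW : (P ∩ W).Nonempty := ⟨y, hy, mem_biUnion ⟨hy, hyR⟩ (mem_ball_self hε)⟩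
  obtain ⟨z, hzP, hzU, hzW⟩ := hconn U W hU hW hcover hPU hPW
  obtain ⟨z₁, hz₁R, hz₁⟩ := mem_iUnion₂.mp hzU
  obtain ⟨z₂, hz₂, hz₂ball⟩ := mem_iUnion₂.mp hzW
  rw [mem_ball] at hz₁ hz₂ball
  have hzR : z ∈ R := hext z₁ hz₁R z hzP (by rw [dist_comm]; exact le_of_lt hz₁)
  exact hz₂.2 (hext z hzR z₂ hz₂.1 (le_of_lt hz₂ball))

end ChainLemmas

section CoreLemma

variable {E : Type*} [NormedAddCommGroup E] [InnerProductSpace ℝ E]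

lemma segment_subset_of_chain
    (P : Set E) (hcomp : IsCompact P) {ε : ℝ} (hε : 0 < ε)
    (hconv : ∀ z ∈ P, Convex ℝ (P ∩ ball z ε))
    {x y : E} {n : ℕ} {p₀ : ℕ → E} (hp0 : p₀ 0 = x) (hptail : ∀ i, n ≤ i → p₀ i = y)
    (hpP : ∀ i, p₀ i ∈ P) (hpstep : ∀ i < n, dist (p₀ i) (p₀ (i + 1)) ≤ ε / 2) :
    segment ℝ x y ⊆ P := by
  have hxP : x ∈ P := hp0 ▸ hpP 0
  rcases Nat.eq_zero_or_pos n with hn | hn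
  · have hxy : x = y := by rw [← hp0, ← hptail 0 (by omega)]
    rw [← hxy, segment_same]
    rintro z rfl
    exact hxP
  -- the set of admissible chains
  set C : Set (ℕ → E) := {q | (∀ i, q i ∈ P) ∧ q 0 = x ∧ (∀ i, n ≤ i → q i = y) ∧
      ∀ i < n, dist (q i) (q (i + 1)) ≤ ε / 2} with hC
  have hCne : C.Nonempty := ⟨p₀, hpP, hp0, hptail, hpstep⟩
  have hCsub : C ⊆ {q : ℕ → E | ∀ i, q i ∈ P} := fun q hq => hq.1
  have hCclosed : IsClosed C := by
    have h1 : IsClosed {q : ℕ → E | ∀ i, q i ∈ P} := by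
      rw [setOf_forall]
      exact isClosed_iInter fun i => hcomp.isClosed.preimage (continuous_apply i)
    have h2 : IsClosed {q : ℕ → E | q 0 = x} :=
      isClosed_eq (continuous_apply 0) continuous_const
    have h3 : IsClosed {q : ℕ → E | ∀ i, n ≤ i → q i = y} := by
      rw [setOf_forall]
      refine isClosed_iInter fun i => ?_
      rcases le_or_gt n i with h | h
      · have : {q : ℕ → E | n ≤ i → q i = y} = {q : ℕ → E | q i = y} := by
          ext q; simp [h]
        rw [this]
        exact isClosed_eq (continuous_apply i) continuous_const
      · have : {q : ℕ → E | n ≤ i → q i = y} = univ := by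
          have hni : ¬ (n ≤ i) := by omega
          ext q; simp [hni]
        rw [this]; exact isClosed_univ
    have h4 : IsClosed {q : ℕ → E | ∀ i < n, dist (q i) (q (i + 1)) ≤ ε / 2} := by
      rw [setOf_forall]
      refine isClosed_iInter fun i => ?_
      rcases lt_or_ge i n with h | h
      · have : {q : ℕ → E | i < n → dist (q i) (q (i + 1)) ≤ ε / 2}
            = {q : ℕ → E | dist (q i) (q (i + 1)) ≤ ε / 2} := by ext q; simp [h]
        rw [this]
        exact isClosed_le (((continuous_apply i).dist (continuous_apply (i + 1)))) continuous_const
      · have : {q : ℕ → E | i < n → dist (q i) (q (i + 1)) ≤ ε / 2} = univ := by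
          have hni : ¬ (i < n) := by omega
          ext q; simp [hni]
        rw [this]; exact isClosed_univ
    exact h1.inter (h2.inter (h3.inter h4))
  have hCcomp : IsCompact C :=
    IsCompact.of_isClosed_subset (isCompact_pi_infinite fun _ => hcomp) hCclosed hCsub
  set En : (ℕ → E) → ℝ := fun q => ∑ i ∈ Finset.range n, dist (q i) (q (i + 1)) ^ 2 with hEn
  have hEncont : Continuous En := by
    apply continuous_finset_sum
    exact fun i _ => ((continuous_apply i).dist (continuous_apply (i + 1))).pow 2
  obtain ⟨q, hqC, hqmin⟩ := hCcomp.exists_isMinOn hCne hEncont.continuousOn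
  obtain ⟨hqP, hq0, hqtail, hqstep⟩ := hqC
  -- every interior point of a minimizing chain is the midpoint of its neighbours
  have hmid : ∀ j, j + 1 < n → q (j + 1) = midpoint ℝ (q j) (q (j + 1 + 1)) := by
    intro j hj
    have ha : dist (q j) (q (j + 1)) ≤ ε / 2 := hqstep j (by omega)
    have hb : dist (q (j + 1)) (q (j + 1 + 1)) ≤ ε / 2 := hqstep (j + 1) (by omega)
    have hd : dist (q j) (q (j + 1 + 1)) ≤ dist (q j) (q (j + 1)) + dist (q (j + 1)) (q (j + 1 + 1)) :=
      dist_triangle _ _ _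
    have ha0 : (0:ℝ) ≤ dist (q j) (q (j + 1)) := dist_nonneg
    have hb0 : (0:ℝ) ≤ dist (q (j + 1)) (q (j + 1 + 1)) := dist_nonneg
    have hd0 : (0:ℝ) ≤ dist (q j) (q (j + 1 + 1)) := dist_nonneg
    have hmP : midpoint ℝ (q j) (q (j + 1 + 1)) ∈ P := by
      have hub : q j ∈ ball (q (j + 1)) ε := by
        rw [mem_ball]
        exact ha.trans_lt (by linarith)
      have hwb : q (j + 1 + 1) ∈ ball (q (j + 1)) ε := by
        rw [mem_ball, dist_comm]
        exact hb.trans_lt (by linarith)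
      exact ((hconv (q (j + 1)) (hqP (j + 1))).segment_subset ⟨hqP j, hub⟩
        ⟨hqP (j + 1 + 1), hwb⟩ (midpoint_mem_segment _ _)).1
    have hdum : dist (q j) (midpoint ℝ (q j) (q (j + 1 + 1)))
        = dist (q j) (q (j + 1 + 1)) / 2 := by
      rw [dist_left_midpoint, Real.norm_two]; ring
    have hdmw : dist (midpoint ℝ (q j) (q (j + 1 + 1))) (q (j + 1 + 1))
        = dist (q j) (q (j + 1 + 1)) / 2 := by
      rw [dist_midpoint_right, Real.norm_two]; ring
    have hq'C : Function.update q (j + 1) (midpoint ℝ (q j) (q (j + 1 + 1))) ∈ C := by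
      refine ⟨?_, ?_, ?_, ?_⟩
      · intro i
        rcases eq_or_ne i (j + 1) with h | h
        · rw [h, Function.update_self]; exact hmP
        · rw [Function.update_of_ne h]; exact hqP i
      · rw [Function.update_of_ne (by omega : (0:ℕ) ≠ j + 1)]; exact hq0
      · intro i hi
        rw [Function.update_of_ne (by omega : i ≠ j + 1)]; exact hqtail i hi
      · intro i hi
        rcases eq_or_ne i j with h1 | h1
        · rw [h1, Function.update_of_ne (by omega : j ≠ j + 1), Function.update_self, hdum]
          linarith
        · rcases eq_or_ne i (j + 1) with h2 | h2
          · rw [h2, Function.update_self,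
              Function.update_of_ne (by omega : j + 1 + 1 ≠ j + 1), hdmw]
            linarith
          · rw [Function.update_of_ne h2, Function.update_of_ne (by omega : i + 1 ≠ j + 1)]
            exact hqstep i hi
    have hmin : En q ≤ En (Function.update q (j + 1) (midpoint ℝ (q j) (q (j + 1 + 1)))) :=
      (isMinOn_iff.mp hqmin) _ hq'C
    have hj1 : j ∈ Finset.range n := by simp only [Finset.mem_range]; omega
    have hj2 : (j + 1) ∈ (Finset.range n).erase j := by
      simp only [Finset.mem_erase, Finset.mem_range]; omega
    have hsplit : ∀ r : ℕ → E, (∑ i ∈ Finset.range n, dist (r i) (r (i + 1)) ^ 2)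
        = dist (r j) (r (j + 1)) ^ 2 + (dist (r (j + 1)) (r (j + 1 + 1)) ^ 2 +
          ∑ i ∈ ((Finset.range n).erase j).erase (j + 1), dist (r i) (r (i + 1)) ^ 2) := by
      intro r
      rw [← Finset.add_sum_erase _ _ hj1, ← Finset.add_sum_erase _ _ hj2]
    have etail : (∑ i ∈ ((Finset.range n).erase j).erase (j + 1),
          dist (Function.update q (j + 1) (midpoint ℝ (q j) (q (j + 1 + 1))) i)
            (Function.update q (j + 1) (midpoint ℝ (q j) (q (j + 1 + 1))) (i + 1)) ^ 2)
        = ∑ i ∈ ((Finset.range n).erase j).erase (j + 1), dist (q i) (q (i + 1)) ^ 2 := by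
      refine Finset.sum_congr rfl fun i hi => ?_
      have h1 : i ≠ j + 1 := (Finset.mem_erase.mp hi).1
      have h2 : i ≠ j := (Finset.mem_erase.mp (Finset.mem_erase.mp hi).2).1
      rw [Function.update_of_ne h1, Function.update_of_ne (by omega : i + 1 ≠ j + 1)]
    have key : dist (q j) (q (j + 1)) ^ 2 + dist (q (j + 1)) (q (j + 1 + 1)) ^ 2
        ≤ (dist (q j) (q (j + 1 + 1)) / 2) ^ 2 + (dist (q j) (q (j + 1 + 1)) / 2) ^ 2 := by
      have e1 := hsplit q
      have e2 := hsplit (Function.update q (j + 1) (midpoint ℝ (q j) (q (j + 1 + 1))))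
      rw [Function.update_of_ne (by omega : j ≠ j + 1), Function.update_self,
        Function.update_of_ne (by omega : j + 1 + 1 ≠ j + 1), etail, hdum, hdmw] at e2
      simp only [hEn] at hmin
      rw [e1, e2] at hmin
      linarith
    have habe : dist (q j) (q (j + 1)) = dist (q (j + 1)) (q (j + 1 + 1)) := by
      nlinarith [sq_nonneg (dist (q j) (q (j + 1)) - dist (q (j + 1)) (q (j + 1 + 1)))]
    have hsum : dist (q j) (q (j + 1)) + dist (q (j + 1)) (q (j + 1 + 1))
        = dist (q j) (q (j + 1 + 1)) := by
      nlinarith [sq_nonneg (dist (q j) (q (j + 1)) + dist (q (j + 1)) (q (j + 1 + 1))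
        - dist (q j) (q (j + 1 + 1)))]
    exact eq_midpoint_of_dist_eq_half (by linarith) (by linarith)
  -- the minimizing chain is an arithmetic progression
  have hconst : ∀ k, k < n → q (k + 1) - q k = q 1 - q 0 := by
    intro k
    induction k with
    | zero => intro _; rfl
    | succ k ih =>
      intro hk
      have h := hmid k (by omega)
      have h2 : q (k + 1) + q (k + 1) = q k + q (k + 1 + 1) := by
        rw [h]; exact midpoint_add_self ℝ _ _
      have h3 : q (k + 1 + 1) - q (k + 1) = q (k + 1) - q k := by
        rw [sub_eq_sub_iff_add_eq_add]
        rw [add_comm (q (k+1+1)) (q k)] at *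
        exact h2.symm
      rw [h3]
      exact ih (by omega)
  have hlin : ∀ j, j ≤ n → q j = x + (j : ℝ) • (q 1 - q 0) := by
    intro j
    induction j with
    | zero => intro _; simp [hq0]
    | succ k ih =>
      intro hk
      have e := ih (by omega)
      have hv : q (k + 1) - q k = q 1 - q 0 := hconst k (by omega)
      have : q (k + 1) = q k + (q 1 - q 0) := by rw [← hv]; abel
      rw [this, e]
      push_cast
      rw [add_smul, one_smul]
      abel
  set v := q 1 - q 0 with hv
  have hyv : y = x + (n : ℝ) • v := by rw [← hqtail n le_rfl]; exact hlin n le_rfl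
  intro c hc
  rw [segment_eq_image'] at hc
  obtain ⟨t, ⟨ht0, ht1⟩, rfl⟩ := hc
  have hyx : y - x = (n : ℝ) • v := by rw [hyv]; abel
  set s := t * n with hs
  have hn1 : (1:ℝ) ≤ n := by exact_mod_cast hn
  have hs0 : 0 ≤ s := mul_nonneg ht0 (by linarith)
  have hsn : s ≤ n := by
    calc s = t * n := rfl
      _ ≤ 1 * n := by apply mul_le_mul_of_nonneg_right ht1; linarith
      _ = n := one_mul _
  set i := min (n - 1) ⌊s⌋₊ with hi
  have hi_n : i < n := by
    have := Nat.min_le_left (n - 1) ⌊s⌋₊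
    omega
  have hcast : ((n - 1 : ℕ) : ℝ) = (n : ℝ) - 1 := by
    have : (1:ℕ) ≤ n := hn
    push_cast [Nat.cast_sub this]
    ring
  have hbound : (i : ℝ) ≤ s ∧ s ≤ (i : ℝ) + 1 := by
    rcases le_or_gt ⌊s⌋₊ (n - 1) with hfl | hfl
    · have : i = ⌊s⌋₊ := by rw [hi]; omega
      rw [this]
      exact ⟨Nat.floor_le hs0, (Nat.lt_floor_add_one s).le⟩
    · have hieq : i = n - 1 := by rw [hi]; omega
      have hnfl : n ≤ ⌊s⌋₊ := by omega
      have : (n : ℝ) ≤ s := by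
        calc (n:ℝ) ≤ (⌊s⌋₊ : ℝ) := by exact_mod_cast hnfl
          _ ≤ s := Nat.floor_le hs0
      have hseq : s = n := le_antisymm hsn this
      rw [hieq, hcast, hseq]
      constructor <;> linarith
  have hzq : x + t • (y - x) = q i + (s - (i:ℝ)) • v := by
    rw [hyx, hlin i (le_of_lt hi_n), smul_smul, ← hs, sub_smul]
    abel
  have hseg : x + t • (y - x) ∈ segment ℝ (q i) (q (i + 1)) := by
    rw [segment_eq_image']
    refine ⟨s - (i:ℝ), ⟨by linarith [hbound.1], by linarith [hbound.2]⟩, ?_⟩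
    have hqi : q (i + 1) - q i = v := hconst i hi_n
    rw [hqi]
    exact hzq.symm
  have h1 : q i ∈ P ∩ ball (q i) ε := ⟨hqP i, mem_ball_self hε⟩
  have h2 : q (i + 1) ∈ P ∩ ball (q i) ε := ⟨hqP (i + 1), by
    rw [mem_ball, dist_comm]
    exact (hqstep i hi_n).trans_lt (by linarith)⟩
  exact ((hconv (q i) (hqP i)).segment_subset h1 h2 hseg).1

end CoreLemma

section Uniform

variable {E : Type*} [NormedAddCommGroup E] [NormedSpace ℝ E]

lemma exists_uniform_convex_radius (P : Set E) (hcomp : IsCompact P) (hne : P.Nonempty)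
    (hloc : ∀ x ∈ P, ∃ r > 0, Convex ℝ (P ∩ ball x r)) :
    ∃ ε > 0, ∀ x ∈ P, Convex ℝ (P ∩ ball x ε) := by
  classical
  choose! r hr hconv using hloc
  have hcover : P ⊆ ⋃ x ∈ P, ball x (r x / 2) := fun x hx =>
    mem_biUnion hx (mem_ball_self (by linarith [hr x hx]))
  obtain ⟨b, hbP, hbfin, hbcover⟩ :=
    hcomp.elim_finite_subcover_image (fun x _ => isOpen_ball) hcover
  have hbne : b.Nonempty := by
    obtain ⟨x, hx⟩ := hne
    obtain ⟨z, hz, _⟩ := mem_iUnion₂.mp (hbcover hx)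
    exact ⟨z, hz⟩
  set F := hbfin.toFinset with hF
  have hFne : F.Nonempty := by
    rwa [hF, Set.Finite.toFinset_nonempty]
  refine ⟨F.inf' hFne (fun x => r x / 2), ?_, ?_⟩
  · show (0:ℝ) < F.inf' hFne (fun x => r x / 2)
    rw [Finset.lt_inf'_iff]
    intro x hx
    have hxb : x ∈ b := by rwa [hF, Set.Finite.mem_toFinset] at hx
    linarith [hr x (hbP hxb)]
  · intro y hy
    obtain ⟨z, hzb, hzball⟩ := mem_iUnion₂.mp (hbcover hy)
    have hzP : z ∈ P := hbP hzb
    have hle : F.inf' hFne (fun x => r x / 2) ≤ r z / 2 :=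
      Finset.inf'_le _ (by rwa [hF, Set.Finite.mem_toFinset])
    have hsub : P ∩ ball y (F.inf' hFne (fun x => r x / 2))
        = (P ∩ ball z (r z)) ∩ ball y (F.inf' hFne (fun x => r x / 2)) := by
      ext w
      constructor
      · rintro ⟨hwP, hwball⟩
        refine ⟨⟨hwP, ?_⟩, hwball⟩
        rw [mem_ball] at *
        calc dist w z ≤ dist w y + dist y z := dist_triangle _ _ _
          _ < F.inf' hFne (fun x => r x / 2) + r z / 2 := by
              exact add_lt_add hwball hzball
          _ ≤ r z / 2 + r z / 2 := by linarith
          _ = r z := by ring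
      · rintro ⟨⟨hwP, _⟩, hwball⟩
        exact ⟨hwP, hwball⟩
    rw [hsub]
    exact (hconv z hzP).inter (convex_ball y _)

end Uniform

section Convexity

variable {E : Type*} [NormedAddCommGroup E] [InnerProductSpace ℝ E]

lemma convex_of_compact_connected_locally_convex (P : Set E)
    (hcomp : IsCompact P) (hconn : IsPreconnected P)
    (hloc : ∀ x ∈ P, ∃ r > 0, Convex ℝ (P ∩ ball x r)) : Convex ℝ P := by
  rcases P.eq_empty_or_nonempty with rfl | hne
  · exact convex_empty
  obtain ⟨ε, hε, hconv⟩ := exists_uniform_convex_radius P hcomp hne hloc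
  rw [convex_iff_segment_subset]
  intro x hx y hy
  obtain ⟨n, p, hp0, hptail, hpP, hpstep⟩ :=
    exists_chain_aux P hconn (by linarith : (0:ℝ) < ε / 2) hx hy
  exact segment_subset_of_chain P hcomp hε hconv hp0 hptail hpP hpstep

end Convexity

section Polyhedra

variable {V : Type*} [NormedAddCommGroup V] [NormedSpace ℝ V] [FiniteDimensional ℝ V]

lemma polyhedron_convex {n : ℕ} (f : Fin n → (V →ᵃ[ℝ] ℝ)) :
    Convex ℝ {y : V | ∀ i, 0 ≤ f i y} := by
  have : {y : V | ∀ i, 0 ≤ f i y} = ⋂ i, (f i) ⁻¹' (Ici 0) := by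
    ext z; simp [Set.mem_iInter, Set.mem_preimage, Set.mem_Ici]
  rw [this]
  exact convex_iInter fun i => (convex_Ici (0:ℝ)).affine_preimage (f i)

lemma polyhedron_extremePoints_finite {n : ℕ} (f : Fin n → (V →ᵃ[ℝ] ℝ)) :
    (Set.extremePoints ℝ {y : V | ∀ i, 0 ≤ f i y}).Finite := by
  classical
  set Q := {y : V | ∀ i, 0 ≤ f i y} with hQdef
  have haff : ∀ (i : Fin n) (z w : V), f i (z + w) = (f i).linear w + f i z := by
    intro i z w
    simpa [add_comm] using (f i).map_vadd z w
  have key : ∀ y ∈ Q.extremePoints ℝ, ∀ v : V,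
      (∀ i, f i y = 0 → (f i).linear v = 0) → v = 0 := by
    intro y hy v hv
    by_contra hv0
    have hev : ∀ i : Fin n, ∀ᶠ t : ℝ in nhds 0, 0 ≤ f i (y + t • v) := by
      intro i
      rcases eq_or_ne (f i y) 0 with h0 | h0
      · refine Filter.Eventually.of_forall fun t => ?_
        rw [haff i y (t • v), map_smul, hv i h0]
        simp [h0]
      · have hpos : 0 < f i y := lt_of_le_of_ne (hy.1 i) (Ne.symm h0)
        have hcont : Continuous fun t : ℝ => f i (y + t • v) :=
          (f i).continuous_of_finiteDimensional.comp
            (continuous_const.add (continuous_id.smul continuous_const))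
        have h0' : f i (y + (0:ℝ) • v) = f i y := by rw [zero_smul, add_zero]
        have hmem : Ioi (0:ℝ) ∈ nhds (f i (y + (0:ℝ) • v)) := by
          rw [h0']; exact Ioi_mem_nhds hpos
        have hpre := (hcont.continuousAt (x := 0)).preimage_mem_nhds hmem
        exact Filter.eventually_of_mem hpre fun t ht => le_of_lt ht
    have hall : ∀ᶠ t : ℝ in nhds 0, ∀ i, 0 ≤ f i (y + t • v) := Filter.eventually_all.mpr hev
    obtain ⟨δ, hδ, hδall⟩ := Metric.eventually_nhds_iff_ball.mp hall
    have hmem1 : y + (δ / 2) • v ∈ Q := by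
      intro i
      exact hδall (δ / 2) (by rw [mem_ball, Real.dist_eq, sub_zero, abs_of_pos (by linarith)]; linarith) i
    have hmem2 : y + (-(δ / 2)) • v ∈ Q := by
      intro i
      refine hδall (-(δ / 2)) ?_ i
      rw [mem_ball, Real.dist_eq, sub_zero, abs_of_neg (by linarith)]
      linarith
    have hopen : y ∈ openSegment ℝ (y + (δ / 2) • v) (y + (-(δ / 2)) • v) := by
      refine ⟨1/2, 1/2, by norm_num, by norm_num, by norm_num, ?_⟩
      module
    have h1 := hy.2 hmem1 hmem2 hopen
    have h2 : (δ / 2) • v = 0 := by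
      have := h1
      rwa [add_eq_left] at this
    rcases smul_eq_zero.mp h2 with h3 | h3
    · exact absurd h3 (by positivity)
    · exact hv0 h3
  have hinj : Set.InjOn (fun y => {i : Fin n | f i y = 0}) (Q.extremePoints ℝ) := by
    intro y hy y' hy' h
    have hv : ∀ i, f i y = 0 → (f i).linear (y' - y) = 0 := by
      intro i h0
      have h0' : f i y' = 0 := by
        have h2 : {i : Fin n | f i y = 0} = {i : Fin n | f i y' = 0} := h
        have hmem : i ∈ {i : Fin n | f i y' = 0} := by
          rw [← h2]; exact h0
        exact hmem
      have hl : f i y' = (f i).linear (y' - y) + f i y := by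
        have := haff i y (y' - y)
        rwa [add_sub_cancel] at this
      rw [h0', h0] at hl
      linarith
    have := key y hy _ hv
    exact (sub_eq_zero.mp this).symm
  exact Set.Finite.of_finite_image (Set.toFinite _) hinj

lemma extremePoints_finite_of_locallyPolyhedral (P : Set V) (hcomp : IsCompact P)
    (hloc : ∀ x ∈ P, ∃ U ∈ nhds x, ∃ (n : ℕ) (f : Fin n → (V →ᵃ[ℝ] ℝ)),
      P ∩ U = {y : V | ∀ i, 0 ≤ f i y} ∩ U) :
    (P.extremePoints ℝ).Finite := by
  classical
  have hx' : ∀ x ∈ P, ∃ r > 0, (P.extremePoints ℝ ∩ ball x r).Finite := by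
    intro x hx
    obtain ⟨U, hU, n, f, heq⟩ := hloc x hx
    obtain ⟨r, hr, hball⟩ := Metric.mem_nhds_iff.mp hU
    refine ⟨r, hr, ?_⟩
    apply Set.Finite.subset (polyhedron_extremePoints_finite f)
    rintro y ⟨hyext, hyball⟩
    have hQconv : Convex ℝ {y : V | ∀ i, 0 ≤ f i y} := polyhedron_convex f
    have hyQ : y ∈ {y : V | ∀ i, 0 ≤ f i y} := by
      have hmem : y ∈ P ∩ U := ⟨hyext.1, hball hyball⟩
      rw [heq] at hmem
      exact hmem.1
    refine ⟨hyQ, ?_⟩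
    rintro u hu w hw hyseg
    obtain ⟨a, b, ha, hb, hab, hy⟩ := hyseg
    have hrd : 0 < r - dist y x := by rw [mem_ball] at hyball; linarith
    set S := ‖u - y‖ + ‖w - y‖ with hS
    have hS0 : 0 ≤ S := by positivity
    set s := min 1 ((r - dist y x) / (S + 1)) with hs
    have hspos : 0 < s := lt_min one_pos (by positivity)
    have hs1 : s ≤ 1 := min_le_left _ _
    have hsS : s * S < r - dist y x := by
      have h1 : s ≤ (r - dist y x) / (S + 1) := min_le_right _ _
      have h2 : s * S ≤ (r - dist y x) / (S + 1) * S :=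
        mul_le_mul_of_nonneg_right h1 hS0
      have h3 : (r - dist y x) / (S + 1) * S < r - dist y x := by
        rw [div_mul_eq_mul_div, div_lt_iff₀ (by positivity)]
        nlinarith
      exact lt_of_le_of_lt h2 h3
    have husub : ∀ p : V, p ∈ {y : V | ∀ i, 0 ≤ f i y} → ‖p - y‖ ≤ S →
        y + s • (p - y) ∈ P := by
      intro p hp hnorm
      have hseg : y + s • (p - y) ∈ segment ℝ y p := by
        rw [segment_eq_image']
        exact ⟨s, ⟨le_of_lt hspos, hs1⟩, rfl⟩
      have hpQ : y + s • (p - y) ∈ {y : V | ∀ i, 0 ≤ f i y} :=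
        hQconv.segment_subset hyQ hp hseg
      have hpball : y + s • (p - y) ∈ ball x r := by
        rw [mem_ball]
        calc dist (y + s • (p - y)) x ≤ dist (y + s • (p - y)) y + dist y x :=
              dist_triangle _ _ _
          _ < r := by
              have hd : dist (y + s • (p - y)) y = s * ‖p - y‖ := by
                rw [dist_eq_norm]
                have : y + s • (p - y) - y = s • (p - y) := by abel
                rw [this, norm_smul, Real.norm_of_nonneg (le_of_lt hspos)]
              rw [hd]
              have : s * ‖p - y‖ ≤ s * S := by
                apply mul_le_mul_of_nonneg_left hnorm (le_of_lt hspos)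
              linarith
      have hmem : y + s • (p - y) ∈ {y : V | ∀ i, 0 ≤ f i y} ∩ U := ⟨hpQ, hball hpball⟩
      rw [← heq] at hmem
      exact hmem.1
    have hu'P : y + s • (u - y) ∈ P := husub u hu (by rw [hS]; linarith [norm_nonneg (w - y)])
    have hw'P : y + s • (w - y) ∈ P := husub w hw (by rw [hS]; linarith [norm_nonneg (u - y)])
    have hyopen' : y ∈ openSegment ℝ (y + s • (u - y)) (y + s • (w - y)) := by
      refine ⟨a, b, ha, hb, hab, ?_⟩
      have hb' : b = 1 - a := by linarith
      subst hb'
      rw [← hy]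
      module
    have h1 := hyext.2 hu'P hw'P hyopen'
    · have h3 : s • (u - y) = 0 := by rwa [add_eq_left] at h1
      rcases smul_eq_zero.mp h3 with h4 | h4
      · exact absurd h4 (ne_of_gt hspos)
      · exact sub_eq_zero.mp h4
  choose! r hr hfin using hx'
  have hcover : P ⊆ ⋃ x ∈ P, ball x (r x) := fun x hx =>
    mem_biUnion hx (mem_ball_self (hr x hx))
  obtain ⟨b, hbP, hbfin, hbcover⟩ :=
    hcomp.elim_finite_subcover_image (fun x _ => isOpen_ball) hcover
  have hsub : P.extremePoints ℝ ⊆ ⋃ x ∈ b, (P.extremePoints ℝ ∩ ball x (r x)) := by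
    intro y hy
    obtain ⟨z, hz, hzball⟩ := mem_iUnion₂.mp (hbcover (extremePoints_subset hy))
    exact mem_biUnion hz ⟨hy, hzball⟩
  exact Set.Finite.subset (Set.Finite.biUnion hbfin fun x hx => hfin x (hbP hx)) hsub

end Polyhedra

/-- A locally polyhedral, compact, connected subset of a
finite-dimensional real affine space (modeled as a vector space) is a polytope,
i.e. the convex hull of finitely many points. -/
theorem locallyPolyhedral_compact_connected_isPolytope
    {V : Type*} [NormedAddCommGroup V] [NormedSpace ℝ V] [FiniteDimensional ℝ V]
    (P : Set V)
    (hloc : ∀ x ∈ P, ∃ U ∈ nhds x, ∃ (n : ℕ) (f : Fin n → (V →ᵃ[ℝ] ℝ)),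
      P ∩ U = {y : V | ∀ i, 0 ≤ f i y} ∩ U)
    (hcomp : IsCompact P) (hconn : IsConnected P) :
    ∃ S : Finset V, P = convexHull ℝ (S : Set V) := by
  classical
  -- per-point local convexity
  have hlocconv : ∀ x ∈ P, ∃ r > 0, Convex ℝ (P ∩ ball x r) := by
    intro x hx
    obtain ⟨U, hU, n, f, heq⟩ := hloc x hx
    obtain ⟨r, hr, hball⟩ := Metric.mem_nhds_iff.mp hU
    refine ⟨r, hr, ?_⟩
    have hQconv : Convex ℝ {y : V | ∀ i, 0 ≤ f i y} := polyhedron_convex f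
    have hPeq : P ∩ ball x r = {y : V | ∀ i, 0 ≤ f i y} ∩ ball x r := by
      ext z
      constructor
      · rintro ⟨hzP, hzb⟩
        have hmem : z ∈ P ∩ U := ⟨hzP, hball hzb⟩
        rw [heq] at hmem
        exact ⟨hmem.1, hzb⟩
      · rintro ⟨hzQ, hzb⟩
        have hmem : z ∈ {y : V | ∀ i, 0 ≤ f i y} ∩ U := ⟨hzQ, hball hzb⟩
        rw [← heq] at hmem
        exact ⟨hmem.1, hzb⟩
    rw [hPeq]
    exact hQconv.inter (convex_ball x r)
  -- transport to a Euclidean space to get strict convexity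
  set e := toEuclidean (E := V) with he
  set P' := e '' P with hP'
  have hcomp' : IsCompact P' := hcomp.image e.continuous
  have hconn' : IsPreconnected P' := hconn.2.image _ e.continuous.continuousOn
  have hlc' : ∀ x' ∈ P', ∃ r' > 0, Convex ℝ (P' ∩ ball x' r') := by
    rintro x' ⟨x, hx, rfl⟩
    obtain ⟨r, hr, hconvPx⟩ := hlocconv x hx
    have himg : Convex ℝ (⇑e '' (P ∩ ball x r)) :=
      hconvPx.is_linear_image ⟨e.map_add, e.map_smul⟩
    have hopen : IsOpen (⇑e '' ball x r) := e.toHomeomorph.isOpenMap _ isOpen_ball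
    have hmem : e x ∈ ⇑e '' ball x r := mem_image_of_mem _ (mem_ball_self hr)
    obtain ⟨r', hr', hsub⟩ := Metric.mem_nhds_iff.mp (hopen.mem_nhds hmem)
    refine ⟨r', hr', ?_⟩
    have hPeq : P' ∩ ball (e x) r' = (⇑e '' (P ∩ ball x r)) ∩ ball (e x) r' := by
      ext z
      constructor
      · rintro ⟨⟨w, hwP, rfl⟩, hzb⟩
        obtain ⟨w2, hw2, hew⟩ := hsub hzb
        have hww : w2 = w := e.injective hew
        subst hww
        exact ⟨⟨w2, ⟨hwP, hw2⟩, rfl⟩, hzb⟩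
      · rintro ⟨⟨w, ⟨hwP, _⟩, rfl⟩, hzb⟩
        exact ⟨⟨w, hwP, rfl⟩, hzb⟩
    rw [hPeq]
    exact himg.inter (convex_ball _ _)
  have hconvP' : Convex ℝ P' :=
    convex_of_compact_connected_locally_convex P' hcomp' hconn' hlc'
  have hconvP : Convex ℝ P := by
    have hPe : P = ⇑e ⁻¹' P' := (e.injective.preimage_image P).symm
    rw [hPe]
    exact hconvP'.is_linear_preimage ⟨e.map_add, e.map_smul⟩
  -- Krein-Milman and finiteness of extreme points
  have hfin : (P.extremePoints ℝ).Finite :=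
    extremePoints_finite_of_locallyPolyhedral P hcomp hloc
  have hKM : closure (convexHull ℝ (P.extremePoints ℝ)) = P :=
    closure_convexHull_extremePoints hcomp hconvP
  have hclosed : IsClosed (convexHull ℝ (P.extremePoints ℝ)) :=
    (hfin.isCompact_convexHull ℝ).isClosed
  refine ⟨hfin.toFinset, ?_⟩
  rw [Set.Finite.coe_toFinset]
  conv_lhs => rw [← hKM]
  rw [hclosed.closure_eq]
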